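/- Let μ ∈ P([0,1]) be a Borel probability measure on [0,1]. Then the integral periodic zero set Z(μ) = {ξ ∈ ℝ : μ̂(ξ+k) = 0 for all k ∈ ℤ} is nonempty if and only if μ = (1/2)(δ_0 + δ_1). -/

import Mathlib

open MeasureTheory Complex

open Set Filter in
private lemma norm_e_aux (t x : ℝ) : ‖Complex.exp (2 * Real.pi * Complex.I * t * x)‖ = 1 := by
  have h : (2 * (Real.pi:ℂ) * Complex.I * t * x) = ((2 * Real.pi * t * x : ℝ) : ℂ) * Complex.I := by
    push_cast; ring
  rw [h]
  exact Complex.norm_exp_ofReal_mul_I _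

private lemma cont_e_aux (t : ℝ) :
    Continuous fun x : ℝ => Complex.exp (2 * Real.pi * Complex.I * t * x) := by
  fun_prop

private lemma integrable_dirac_aux {f : ℝ → ℂ} (hf : Measurable f) (a : ℝ) :
    Integrable f (Measure.dirac a) := by
  refine ⟨hf.aestronglyMeasurable, ?_⟩
  simp [HasFiniteIntegral,
    lintegral_dirac' a (by measurability : Measurable fun x => (‖f x‖₊ : ENNReal))]

private lemma exp_measurable_aux (t : ℝ) :
    Measurable fun x : ℝ => Complex.exp (2 * Real.pi * Complex.I * t * x) := by
  measurability

/-- The Fourier transform `μ̂(t) = ∫ e^{2πitx} dμ(x)`. -/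
noncomputable def ft (μ : Measure ℝ) (t : ℝ) : ℂ :=
  ∫ x, Complex.exp (2 * Real.pi * Complex.I * t * x) ∂μ

open Set Filter in
private lemma stepA_aux (μ : Measure ℝ) [IsProbabilityMeasure μ] (ξ : ℝ)
    (hξ : ∀ k : ℤ, ft μ (ξ + k) = 0) (g : C(AddCircle (1:ℝ), ℂ)) :
    ∫ x, Complex.exp (2 * Real.pi * Complex.I * ξ * x) * g x ∂μ = 0 := by
  haveI : Fact ((0:ℝ) < 1) := ⟨one_pos⟩
  set e : ℝ → ℂ := fun x => Complex.exp (2 * Real.pi * Complex.I * ξ * x) with he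
  set T : C(AddCircle (1:ℝ), ℂ) → ℂ := fun g => ∫ x, e x * g x ∂μ with hT
  have hint : ∀ g : C(AddCircle (1:ℝ), ℂ), Integrable (fun x => e x * g x) μ := by
    intro g
    refine (integrable_const ‖g‖).mono' ?_ ?_
    · exact ((cont_e_aux ξ).mul
        (g.continuous.comp (AddCircle.continuous_mk' 1))).aestronglyMeasurable
    · refine Eventually.of_forall fun x => ?_
      rw [norm_mul, norm_e_aux, one_mul]
      exact g.norm_coe_le_norm _
  have hlip : LipschitzWith 1 T := by
    refine LipschitzWith.of_dist_le_mul fun g₁ g₂ => ?_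
    rw [NNReal.coe_one, one_mul, dist_eq_norm, hT]
    have h12 : T g₁ - T g₂ = ∫ x, e x * g₁ x - e x * g₂ x ∂μ :=
      (integral_sub (hint g₁) (hint g₂)).symm
    calc ‖T g₁ - T g₂‖ = ‖∫ x, e x * g₁ x - e x * g₂ x ∂μ‖ := by rw [h12]
      _ ≤ dist g₁ g₂ * (μ univ).toReal := by
          refine norm_integral_le_of_norm_le_const (Eventually.of_forall fun x => ?_)
          rw [← mul_sub, norm_mul, norm_e_aux, one_mul]
          calc ‖g₁ x - g₂ x‖ = dist (g₁ x) (g₂ x) := by rw [dist_eq_norm]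
            _ ≤ dist g₁ g₂ := ContinuousMap.dist_apply_le_dist _
      _ = dist g₁ g₂ := by simp
  have hspan : ∀ g ∈ Submodule.span ℂ (Set.range (fourier (T := 1))), T g = 0 := by
    intro g hg
    induction hg using Submodule.span_induction with
    | mem g hg =>
        obtain ⟨k, rfl⟩ := hg
        have hfun : (fun x : ℝ => e x * fourier k (x : AddCircle (1:ℝ))) =
            fun x : ℝ => Complex.exp (2 * Real.pi * Complex.I * Complex.ofReal (ξ + (k:ℝ)) * x) := by
          funext x
          rw [fourier_coe_apply, he, ← Complex.exp_add]
          congr 1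
          push_cast
          ring
        rw [hT]
        simp only [hfun]
        exact hξ k
    | zero => simp [hT]
    | add g₁ g₂ _ _ h₁ h₂ =>
        rw [hT]
        simp only [ContinuousMap.add_apply, mul_add]
        rw [integral_add (hint g₁) (hint g₂)]
        rw [hT] at h₁ h₂
        simp [h₁, h₂]
    | smul c g _ h =>
        rw [hT]
        simp only [ContinuousMap.smul_apply, smul_eq_mul, mul_comm (e _), mul_assoc]
        rw [integral_const_mul]
        rw [hT] at h
        simp only [mul_comm] at h ⊢
        simp [h]
  have hclosed : IsClosed {g : C(AddCircle (1:ℝ), ℂ) | T g = 0} :=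
    isClosed_eq hlip.continuous continuous_const
  have hsub : closure ((Submodule.span ℂ (Set.range (fourier (T := 1)))) :
      Set C(AddCircle (1:ℝ), ℂ)) ⊆ {g | T g = 0} := hclosed.closure_subset_iff.mpr hspan
  exact hsub (by
    have h2 : g ∈ (Submodule.span ℂ (Set.range (fourier (T := 1)))).topologicalClosure := by
      rw [span_fourier_closure_eq_top]; trivial
    exact h2)

open Set Filter in
private lemma stepB_aux (μ : Measure ℝ) [IsProbabilityMeasure μ]
    (hsupp : μ (Set.Icc (0:ℝ) 1)ᶜ = 0)
    (ξ : ℝ) (hξ : ∀ k : ℤ, ft μ (ξ + k) = 0) : μ (Set.Ioo (0:ℝ) 1) = 0 := by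
  haveI : Fact ((0:ℝ) < 1) := ⟨one_pos⟩
  have hmem : ∀ᵐ x ∂μ, x ∈ Set.Icc (0:ℝ) 1 := (MeasureTheory.mem_ae_iff.2 hsupp)
  set F : ℝ → ℂ :=
    fun x => ((x * (1 - x) : ℝ) : ℂ) * Complex.exp (2 * Real.pi * Complex.I * (-ξ) * x) with hF
  have hF01 : F 0 = F 1 := by simp [hF]
  have hFc : Continuous F := by fun_prop
  set g : C(AddCircle (1:ℝ), ℂ) :=
    ⟨AddCircle.liftIco 1 0 F, AddCircle.liftIco_zero_continuous hF01 hFc.continuousOn⟩ with hg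
  have h0 := stepA_aux μ ξ hξ g
  have hae : (fun x => Complex.exp (2 * Real.pi * Complex.I * ξ * x) * g x)
      =ᵐ[μ] fun x => ((x * (1 - x) : ℝ) : ℂ) := by
    filter_upwards [hmem] with x hx
    rcases eq_or_lt_of_le hx.2 with h1 | h1
    · have hcoe : ((x : ℝ) : AddCircle (1:ℝ)) = ((0 : ℝ) : AddCircle (1:ℝ)) := by
        rw [← h1]; simp [AddCircle.coe_period]
      have : g x = F 0 := by
        rw [hg]
        simp only [ContinuousMap.coe_mk, hcoe]
        exact AddCircle.liftIco_zero_coe_apply (by constructor <;> norm_num)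
      rw [this]
      simp [hF, ← h1]
    · have : g x = F x := by
        simp only [hg, ContinuousMap.coe_mk]
        exact AddCircle.liftIco_zero_coe_apply ⟨hx.1, h1⟩
      rw [this, hF]
      have : Complex.exp (2 * Real.pi * Complex.I * ξ * x) *
          (((x * (1 - x) : ℝ) : ℂ) * Complex.exp (2 * Real.pi * Complex.I * (-ξ) * x))
          = ((x * (1 - x) : ℝ) : ℂ) *
            Complex.exp (2 * Real.pi * Complex.I * ξ * x + 2 * Real.pi * Complex.I * (-ξ) * x) := by
        rw [Complex.exp_add]; ring
      rw [this]
      have : (2 * (Real.pi:ℂ) * Complex.I * ξ * x + 2 * Real.pi * Complex.I * (-ξ) * x) = 0 := by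
        ring
      rw [this, Complex.exp_zero, mul_one]
  rw [integral_congr_ae hae] at h0
  have h0' : ∫ x, x * (1 - x) ∂μ = 0 := by
    have h2 : ∫ x, (RCLike.ofReal (x * (1 - x)) : ℂ) ∂μ = 0 := h0
    rw [integral_ofReal] at h2
    exact RCLike.ofReal_eq_zero.mp h2
  have hintχ : Integrable (fun x : ℝ => x * (1 - x)) μ := by
    refine (integrable_const 1).mono'
      ((by fun_prop : Continuous fun x : ℝ => x * (1 - x)).aestronglyMeasurable) ?_
    filter_upwards [hmem] with x hx
    rw [Real.norm_eq_abs, _root_.abs_of_nonneg (mul_nonneg hx.1 (by linarith [hx.2]))]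
    nlinarith [hx.1, hx.2]
  have hnn : 0 ≤ᵐ[μ] fun x : ℝ => x * (1 - x) := by
    filter_upwards [hmem] with x hx
    exact mul_nonneg hx.1 (by linarith [hx.2])
  have hz : (fun x : ℝ => x * (1 - x)) =ᵐ[μ] 0 :=
    (integral_eq_zero_iff_of_nonneg_ae hnn hintχ).1 h0'
  have hz' : ∀ᵐ x ∂μ, x * (1 - x) = 0 := by
    filter_upwards [hz] with x h
    simpa using h
  have hnull : μ {x : ℝ | ¬ (x * (1 - x) = 0)} = 0 := ae_iff.1 hz'
  refine measure_mono_null ?_ hnull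
  intro x hx
  simp only [Set.mem_setOf_eq]
  exact ne_of_gt (mul_pos hx.1 (by linarith [hx.2]))

open Set Filter in
private lemma stepC_aux (μ : Measure ℝ) [IsProbabilityMeasure μ]
    (hsupp : μ (Set.Icc (0:ℝ) 1)ᶜ = 0) (hIoo : μ (Set.Ioo (0:ℝ) 1) = 0) :
    μ = μ {0} • Measure.dirac (0:ℝ) + μ {1} • Measure.dirac 1 := by
  have hc : μ ({0, 1} : Set ℝ)ᶜ = 0 := by
    have hsub : (({0,1} : Set ℝ)ᶜ) ⊆ (Set.Icc 0 1)ᶜ ∪ Set.Ioo 0 1 := by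
      intro x hx
      simp only [mem_compl_iff, mem_insert_iff, mem_singleton_iff, not_or] at hx
      by_cases h : x ∈ Set.Icc (0:ℝ) 1
      · right; exact ⟨lt_of_le_of_ne h.1 (Ne.symm hx.1), lt_of_le_of_ne h.2 hx.2⟩
      · left; exact h
    refine measure_mono_null hsub ?_
    exact le_antisymm (le_trans (measure_union_le _ _) (by rw [hsupp, hIoo]; simp)) zero_le
  have hres : μ.restrict {0,1} = μ := Measure.restrict_eq_self_of_ae_mem (mem_ae_iff.2 hc)
  conv_lhs => rw [← hres]
  have h01 : ({0,1} : Set ℝ) = {0} ∪ {1} := rfl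
  rw [h01, Measure.restrict_union (Set.disjoint_singleton.mpr (by norm_num))
      (measurableSet_singleton 1), Measure.restrict_singleton, Measure.restrict_singleton]

open Set Filter in
private lemma stepD_aux (μ : Measure ℝ) [IsProbabilityMeasure μ]
    (hC : μ = μ {0} • Measure.dirac (0:ℝ) + μ {1} • Measure.dirac 1)
    (ξ : ℝ) (hft : ft μ ξ = 0) :
    μ = (2 : ENNReal)⁻¹ • (Measure.dirac (0:ℝ) + Measure.dirac (1:ℝ)) := by
  set a := (μ {0}).toReal with ha
  set b := (μ {1}).toReal with hb
  have h0top : μ {0} ≠ ⊤ := measure_ne_top μ _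
  have h1top : μ {1} ≠ ⊤ := measure_ne_top μ _
  have hab : a + b = 1 := by
    have huniv : μ Set.univ = 1 := measure_univ
    rw [hC] at huniv
    simp only [Measure.add_apply, Measure.smul_apply, Measure.dirac_apply, smul_eq_mul] at huniv
    rw [ha, hb, ← ENNReal.toReal_add h0top h1top]
    simp only [Set.mem_univ, Set.indicator_of_mem, Pi.one_apply, mul_one] at huniv
    rw [huniv]
    simp
  have hint0 : Integrable (fun x : ℝ => Complex.exp (2 * Real.pi * Complex.I * ξ * x))
      (μ {0} • Measure.dirac (0:ℝ)) :=
    (integrable_dirac_aux (exp_measurable_aux ξ) 0).smul_measure h0top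
  have hint1 : Integrable (fun x : ℝ => Complex.exp (2 * Real.pi * Complex.I * ξ * x))
      (μ {1} • Measure.dirac (1:ℝ)) :=
    (integrable_dirac_aux (exp_measurable_aux ξ) 1).smul_measure h1top
  have key : (a : ℂ) + Complex.exp (2 * Real.pi * Complex.I * ξ * (1:ℝ)) * b = 0 := by
    rw [ft, hC, integral_add_measure hint0 hint1, integral_smul_measure, integral_smul_measure,
      integral_dirac, integral_dirac] at hft
    have e0 : (2 * (Real.pi:ℂ) * Complex.I * ξ * ((0:ℝ):ℂ)) = 0 := by push_cast; ring
    rw [e0, Complex.exp_zero] at hft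
    simp only [Complex.real_smul, mul_one] at hft
    rw [ha, hb]
    linear_combination hft
  set z := Complex.exp (2 * Real.pi * Complex.I * ξ * (1:ℝ)) with hz
  have hzn : ‖z‖ = 1 := norm_e_aux ξ 1
  have haz : (a : ℂ) = -(z * b) := by linear_combination key
  have hanb : a = b := by
    have h1 : ‖(a:ℂ)‖ = ‖-(z * b)‖ := by rw [haz]
    rw [norm_neg, norm_mul, hzn, one_mul, Complex.norm_real, Complex.norm_real] at h1
    rw [Real.norm_eq_abs, Real.norm_eq_abs, _root_.abs_of_nonneg ENNReal.toReal_nonneg,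
      _root_.abs_of_nonneg ENNReal.toReal_nonneg] at h1
    exact h1
  have ha2 : a = 1/2 := by rw [hanb] at hab ⊢; linarith
  have hb2 : b = 1/2 := by rw [← hanb] at hab ⊢; linarith [ha2]
  have hμ0 : μ {0} = (2:ENNReal)⁻¹ := by
    have := congrArg ENNReal.ofReal ha2
    rw [ha, ENNReal.ofReal_toReal h0top] at this
    rw [this]
    rw [show ((1:ℝ)/2) = (2:ℝ)⁻¹ by norm_num, ENNReal.ofReal_inv_of_pos (by norm_num : (0:ℝ) < 2)]
    norm_num
  have hμ1 : μ {1} = (2:ENNReal)⁻¹ := by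
    have := congrArg ENNReal.ofReal hb2
    rw [hb, ENNReal.ofReal_toReal h1top] at this
    rw [this]
    rw [show ((1:ℝ)/2) = (2:ℝ)⁻¹ by norm_num, ENNReal.ofReal_inv_of_pos (by norm_num : (0:ℝ) < 2)]
    norm_num
  rw [hC, hμ0, hμ1, smul_add]

/-- Let `μ` be a Borel probability measure on `[0,1]`.  The integral
periodic zero set `Z(μ) = {ξ : μ̂(ξ+k) = 0 for all k ∈ ℤ}` is nonempty iff
`μ = (1/2)(δ₀ + δ₁)`. -/
theorem integral_periodic_zero_set_nonempty_iff
    (μ : Measure ℝ) [IsProbabilityMeasure μ] (hsupp : μ (Set.Icc (0:ℝ) 1)ᶜ = 0) :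
    (∃ ξ : ℝ, ∀ k : ℤ, ft μ (ξ + k) = 0) ↔
      μ = (2 : ENNReal)⁻¹ • (Measure.dirac (0:ℝ) + Measure.dirac (1:ℝ)) := by
  constructor
  · rintro ⟨ξ, hξ⟩
    have hIoo := stepB_aux μ hsupp ξ hξ
    have hC := stepC_aux μ hsupp hIoo
    have hft0 : ft μ ξ = 0 := by simpa using hξ 0
    exact stepD_aux μ hC ξ hft0
  · rintro rfl
    refine ⟨1/2, fun k => ?_⟩
    have h0 := integrable_dirac_aux (exp_measurable_aux (1/2 + k)) (0:ℝ)
    have h1 := integrable_dirac_aux (exp_measurable_aux (1/2 + k)) (1:ℝ)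
    rw [ft, integral_smul_measure, integral_add_measure h0 h1, integral_dirac, integral_dirac]
    have e0 : (2 * (Real.pi:ℂ) * Complex.I * (((1:ℝ)/2 + (k:ℝ) : ℝ):ℂ) * ((0:ℝ):ℂ)) = 0 := by
      push_cast; ring
    have e1 : (2 * (Real.pi:ℂ) * Complex.I * (((1:ℝ)/2 + (k:ℝ) : ℝ):ℂ) * ((1:ℝ):ℂ))
        = Real.pi * Complex.I + k * (2 * Real.pi * Complex.I) := by
      push_cast; ring
    rw [e0, e1, Complex.exp_zero, Complex.exp_add, Complex.exp_pi_mul_I,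
      Complex.exp_int_mul_two_pi_mul_I]
    norm_num
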